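/- Let k ≥ 3 be an integer and n a positive integer. If a, b, c, d, e are positive integers with n³ ≤ a < b < c < d < e such that the set {a, b, c, d, e} has property D_k(−n), then e ≥ b^(k−1). -/

import Mathlib

lemma aux_pow_gap (k X : ℕ) : X^k + k * X^(k-1) ≤ (X+1)^k := by
  induction k with
  | zero => simp
  | succ k ih =>
    rcases Nat.eq_zero_or_pos k with rfl | hk
    · simp
    · have h2 : X^(k-1) * X = X^k := by
        rw [← pow_succ]
        congr 1
        omega
      have h3 : (X+1)^(k+1) = (X+1)^k * (X+1) := by ring
      have h4 : (X^k + k * X^(k-1)) * (X+1) ≤ (X+1)^k * (X+1) :=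
        Nat.mul_le_mul_right _ ih
      have he : (X^k + k * X^(k-1)) * (X+1)
          = X^(k+1) + k * X^k + X^k + k * X^(k-1) := by
        calc (X^k + k * X^(k-1)) * (X+1)
            = X^k * X + k * (X^(k-1) * X) + X^k + k * X^(k-1) := by ring
          _ = X^(k+1) + k * X^k + X^k + k * X^(k-1) := by rw [h2, ← pow_succ]
      have h5 : X^(k+1) + (k+1) * X^((k+1)-1) ≤ (X^k + k * X^(k-1)) * (X+1) := by
        simp only [Nat.add_sub_cancel, add_mul, one_mul]
        linarith [he, Nat.zero_le (k * X^(k-1))]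
      exact le_trans h5 (le_trans h4 (le_of_eq h3.symm))

set_option maxHeartbeats 1000000 in
/-- if k ≥ 3, n > 0 and n³ ≤ a < b < c < d < e are positive integers such
that {a,b,c,d,e} has property D_k(−n), then e ≥ b^(k−1). -/
theorem stmt_8 (k n a b c d e : ℕ) (hk : 3 ≤ k) (hn : 0 < n)
    (h1 : n ^ 3 ≤ a) (hab : a < b) (hbc : b < c) (hcd : c < d) (hde : d < e)
    (hD : ∀ x ∈ ({a, b, c, d, e} : Finset ℕ), ∀ y ∈ ({a, b, c, d, e} : Finset ℕ),
      x ≠ y → ∃ z : ℕ, (x * y : ℤ) - n = (z : ℤ) ^ k) :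
    b ^ (k - 1) ≤ e := by
  by_contra hcon
  push_neg at hcon
  -- basic size facts
  have hna : n ≤ a := le_trans (Nat.le_self_pow (by norm_num) n) h1
  have ha1 : 1 ≤ a := le_trans hn hna
  have hb2 : 2 ≤ b := by omega
  have hc3 : 3 ≤ c := by omega
  have hd4 : 4 ≤ d := by omega
  have he5 : 5 ≤ e := by omega
  -- extract the four k-th powers
  obtain ⟨q, hq⟩ := hD b (by simp) e (by simp) (by omega)
  obtain ⟨w, hw⟩ := hD c (by simp) d (by simp) (by omega)
  obtain ⟨r, hr⟩ := hD c (by simp) e (by simp) (by omega)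
  obtain ⟨v, hv⟩ := hD b (by simp) d (by simp) (by omega)
  have hqn : b * e = q ^ k + n := by
    have : ((b * e : ℕ) : ℤ) = ((q ^ k + n : ℕ) : ℤ) := by push_cast; linarith
    exact_mod_cast this
  have hwn : c * d = w ^ k + n := by
    have : ((c * d : ℕ) : ℤ) = ((w ^ k + n : ℕ) : ℤ) := by push_cast; linarith
    exact_mod_cast this
  have hrn : c * e = r ^ k + n := by
    have : ((c * e : ℕ) : ℤ) = ((r ^ k + n : ℕ) : ℤ) := by push_cast; linarith
    exact_mod_cast this
  have hvn : b * d = v ^ k + n := by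
    have : ((b * d : ℕ) : ℤ) = ((v ^ k + n : ℕ) : ℤ) := by push_cast; linarith
    exact_mod_cast this
  -- key identity : (q*w)^k = (r*v)^k + n*((c-b)*(e-d))
  have key : (q * w) ^ k = (r * v) ^ k + n * ((c - b) * (e - d)) := by
    have hZ : ((q : ℤ) * w) ^ k = ((r : ℤ) * v) ^ k
        + (n : ℤ) * (((c : ℤ) - b) * ((e : ℤ) - d)) := by
      rw [mul_pow, mul_pow, ← hq, ← hw, ← hr, ← hv]
      ring
    have hZ2 : (((r * v) ^ k + n * ((c - b) * (e - d)) : ℕ) : ℤ)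
        = ((r * v : ℕ) : ℤ) ^ k + (n : ℤ) * (((c : ℤ) - b) * ((e : ℤ) - d)) := by
      push_cast [Nat.cast_sub hbc.le, Nat.cast_sub hde.le]
      ring
    have : (((q * w) ^ k : ℕ) : ℤ) = (((r * v) ^ k + n * ((c - b) * (e - d)) : ℕ) : ℤ) := by
      rw [hZ2]
      push_cast
      linarith [hZ]

    exact_mod_cast this
  set X := r * v with hX
  set N := n * ((c - b) * (e - d)) with hNdef
  have hN1 : 1 ≤ N := by
    have : 1 ≤ (c - b) * (e - d) := Nat.one_le_iff_ne_zero.mpr (by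
      have h1 : 0 < c - b := by omega
      have h2 : 0 < e - d := by omega
      positivity)
    calc 1 = 1 * 1 := by ring
    _ ≤ n * ((c - b) * (e - d)) := Nat.mul_le_mul hn this
  -- gap: N ≥ k * X^(k-1)
  have hXY : X < q * w := by
    have hpow : X ^ k < (q * w) ^ k := by omega
    exact lt_of_pow_lt_pow_left₀ k (Nat.zero_le _) hpow
  have hgap : k * X ^ (k - 1) ≤ N := by
    have h1 : (X + 1) ^ k ≤ (q * w) ^ k := Nat.pow_le_pow_left (by omega) k
    have h2 := aux_pow_gap k X
    omega
  have h3N : 3 * X ^ (k - 1) ≤ N := le_trans (Nat.mul_le_mul_right _ (by omega)) hgap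
  -- lower bound on X^k
  have hXk : 3 * (b * c * d * e) ≤ 5 * X ^ k := by
    have hr' : c * (e - 1) ≤ r ^ k := by
      have h : c * (e - 1) + c = c * e := by
        rw [← Nat.mul_succ]; congr 1; omega
      omega
    have hv' : b * (d - 1) ≤ v ^ k := by
      have h : b * (d - 1) + b = b * d := by
        rw [← Nat.mul_succ]; congr 1; omega
      omega
    have hXeq : X ^ k = r ^ k * v ^ k := by rw [hX, mul_pow]
    have he' : 4 * e ≤ 5 * (e - 1) := by omega
    have hd' : 3 * d ≤ 4 * (d - 1) := by omega
    nlinarith [Nat.mul_le_mul hr' hv', Nat.mul_le_mul he' hd',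
      Nat.zero_le (b * c), Nat.zero_le b, Nat.zero_le c]
  -- upper bound on N
  have hNce : N ≤ n * (c * e) := by
    apply Nat.mul_le_mul_left
    exact Nat.mul_le_mul (by omega) (by omega)
  -- combine : 3 * (b*c*d*e)^(k-1) ≤ (n*(c*e))^k
  have hcomb : 3 * (b * c * d * e) ^ (k - 1) ≤ (n * (c * e)) ^ k := by
    have s1 : (3 * X ^ (k - 1)) ^ k ≤ (n * (c * e)) ^ k :=
      Nat.pow_le_pow_left (le_trans h3N hNce) k
    have s2 : (3 * X ^ (k - 1)) ^ k = 3 ^ k * (X ^ k) ^ (k - 1) := by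
      rw [mul_pow, ← pow_mul, ← pow_mul, Nat.mul_comm (k - 1) k]
    have s3 : (3 * (b * c * d * e)) ^ (k - 1) ≤ (5 * X ^ k) ^ (k - 1) :=
      Nat.pow_le_pow_left hXk (k - 1)
    have s4 : 3 ^ (k - 1) * (b * c * d * e) ^ (k - 1) * 3 ^ k
        ≤ 5 ^ (k - 1) * (n * (c * e)) ^ k := by
      calc 3 ^ (k - 1) * (b * c * d * e) ^ (k - 1) * 3 ^ k
          = (3 * (b * c * d * e)) ^ (k - 1) * 3 ^ k := by rw [← mul_pow]
        _ ≤ (5 * X ^ k) ^ (k - 1) * 3 ^ k := Nat.mul_le_mul_right _ s3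
        _ = 5 ^ (k - 1) * (3 ^ k * (X ^ k) ^ (k - 1)) := by rw [mul_pow]; ring
        _ = 5 ^ (k - 1) * (3 * X ^ (k - 1)) ^ k := by rw [s2]
        _ ≤ 5 ^ (k - 1) * (n * (c * e)) ^ k := Nat.mul_le_mul_left _ s1
    have s5 : 3 * 5 ^ (k - 1) ≤ 3 ^ (k - 1) * 3 ^ k := by
      have h9 : 5 ^ (k - 1) ≤ 9 ^ (k - 1) := Nat.pow_le_pow_left (by norm_num) _
      have h3 : 3 ^ (k - 1) * 3 ^ k = 3 * 9 ^ (k - 1) := by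
        have : 3 ^ (k - 1) * 3 ^ k = 3 ^ ((k - 1) + k) := by rw [pow_add]
        rw [this]
        have hkk : (k - 1) + k = 2 * (k - 1) + 1 := by omega
        rw [hkk, pow_succ, pow_mul]
        norm_num
        ring
      omega
    have s6 : 3 * 5 ^ (k - 1) * (b * c * d * e) ^ (k - 1)
        ≤ 5 ^ (k - 1) * (n * (c * e)) ^ k := by
      calc 3 * 5 ^ (k - 1) * (b * c * d * e) ^ (k - 1)
          ≤ 3 ^ (k - 1) * 3 ^ k * (b * c * d * e) ^ (k - 1) :=
            Nat.mul_le_mul_right _ s5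
        _ = 3 ^ (k - 1) * (b * c * d * e) ^ (k - 1) * 3 ^ k := by ring
        _ ≤ 5 ^ (k - 1) * (n * (c * e)) ^ k := s4
    have h5pos : 0 < 5 ^ (k - 1) := Nat.pow_pos (by norm_num)
    have s7 : 5 ^ (k - 1) * (3 * (b * c * d * e) ^ (k - 1))
        ≤ 5 ^ (k - 1) * (n * (c * e)) ^ k := by
      calc 5 ^ (k - 1) * (3 * (b * c * d * e) ^ (k - 1))
          = 3 * 5 ^ (k - 1) * (b * c * d * e) ^ (k - 1) := by ring
        _ ≤ 5 ^ (k - 1) * (n * (c * e)) ^ k := s6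
    exact Nat.le_of_mul_le_mul_left s7 h5pos
  -- upper bound : (n*(c*e))^k ≤ (b*c*d*e)^(k-1)
  have hup : (n * (c * e)) ^ k ≤ (b * c * d * e) ^ (k - 1) := by
    have hnk : n ^ k ≤ d ^ (k - 2) := by
      calc n ^ k ≤ n ^ (3 * (k - 2)) := Nat.pow_le_pow_right (by omega) (by omega)
        _ = (n ^ 3) ^ (k - 2) := by rw [← pow_mul]
        _ ≤ d ^ (k - 2) := Nat.pow_le_pow_left (by omega) _
    have hck : c ^ k ≤ c ^ (k - 1) * d := by
      calc c ^ k = c ^ (k - 1) * c := by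
            rw [← pow_succ]; congr 1; omega
        _ ≤ c ^ (k - 1) * d := Nat.mul_le_mul_left _ (by omega)
    have hek : e ^ k ≤ e ^ (k - 1) * b ^ (k - 1) := by
      calc e ^ k = e ^ (k - 1) * e := by
            rw [← pow_succ]; congr 1; omega
        _ ≤ e ^ (k - 1) * b ^ (k - 1) := Nat.mul_le_mul_left _ hcon.le
    have hdd : d ^ (k - 2) * d = d ^ (k - 1) := by
      rw [← pow_succ]; congr 1; omega
    calc (n * (c * e)) ^ k = n ^ k * (c ^ k * e ^ k) := by
          rw [mul_pow, mul_pow]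
      _ ≤ d ^ (k - 2) * ((c ^ (k - 1) * d) * (e ^ (k - 1) * b ^ (k - 1))) :=
          Nat.mul_le_mul hnk (Nat.mul_le_mul hck hek)
      _ = (d ^ (k - 2) * d) * (b ^ (k - 1) * c ^ (k - 1) * e ^ (k - 1)) := by ring
      _ = d ^ (k - 1) * (b ^ (k - 1) * c ^ (k - 1) * e ^ (k - 1)) := by rw [hdd]
      _ = (b * c * d * e) ^ (k - 1) := by
          rw [mul_pow, mul_pow, mul_pow]; ring
  have hpos : 1 ≤ (b * c * d * e) ^ (k - 1) :=
    Nat.one_le_pow _ _ (by positivity)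
  omega
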